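/- arXiv:1907.06150 — 4 statements merged into one kernel-verified Lean document; each statement's English description precedes it below -/
import Mathlib

section
/- Let H be a complex Hilbert space and T a bounded self-adjoint operator on H. Then the map λ ↦ T ∘ (1 + λ² + T²)⁻¹ from [0, ∞) to B(H) is Bochner integrable with respect to Lebesgue measure, and (2/π) · ∫₀^∞ T ∘ (1 + λ² + T²)⁻¹ dλ = f(T), where f(T) denotes the continuous functional calculus of the function f(x) = x/√(1 + x²) applied to T. -/
set_option synthInstance.maxHeartbeats 1000000
set_option maxHeartbeats 1000000


open MeasureTheory

/-- The resolvent `(1 + l² + T²)⁻¹` of a bounded operator `T` on a complex Hilbert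
space (via `Ring.inverse`, which gives the honest inverse when it exists). -/
noncomputable def resolvent2 {H : Type*} [NormedAddCommGroup H] [InnerProductSpace ℂ H]
    [CompleteSpace H] (T : H →L[ℂ] H) (l : ℝ) : H →L[ℂ] H :=
  Ring.inverse (((1 + l ^ 2 : ℝ) : ℂ) • (1 : H →L[ℂ] H) + T ^ 2)

section Aux

open Real

lemma aux_int (a : ℝ) (ha : 0 < a) :
    ∫ l in Set.Ioi (0:ℝ), (a^2 + l^2)⁻¹ = π/2 * a⁻¹ := by
  have key : ∀ l : ℝ, (a^2 + l^2)⁻¹ = a⁻¹ * a⁻¹ * (1 + (a⁻¹ * l)^2)⁻¹ := by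
    intro l
    rw [mul_pow, ← mul_inv, ← mul_inv]
    congr 1
    field_simp
  simp_rw [key]
  rw [MeasureTheory.integral_const_mul,
    MeasureTheory.integral_comp_mul_left_Ioi (fun x : ℝ => (1 + x^2)⁻¹) 0 (inv_pos.mpr ha)]
  simp [smul_eq_mul, integral_Ioi_inv_one_add_sq]
  field_simp

lemma aux_int2 (x : ℝ) :
    ∫ l in Set.Ici (0:ℝ), x / (1 + l^2 + x^2) = π/2 * (x / Real.sqrt (1 + x^2)) := by
  set a := Real.sqrt (1 + x^2) with ha'
  have ha : 0 < a := Real.sqrt_pos.mpr (by positivity)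
  have ha2 : a^2 = 1 + x^2 := Real.sq_sqrt (by positivity)
  have key : ∀ l : ℝ, x / (1 + l^2 + x^2) = x * (a^2 + l^2)⁻¹ := by
    intro l; rw [ha2, div_eq_mul_inv]; ring_nf
  simp_rw [MeasureTheory.integral_Ici_eq_integral_Ioi, key]
  rw [MeasureTheory.integral_const_mul, aux_int a ha, div_eq_mul_inv]
  ring

variable {H : Type*} [NormedAddCommGroup H] [InnerProductSpace ℂ H] [CompleteSpace H]

lemma cfc_poly (T : H →L[ℂ] H) (hT : IsSelfAdjoint T) (l : ℝ) :
    cfc (fun x : ℝ => 1 + l^2 + x^2) T = ((1 + l ^ 2 : ℝ) : ℂ) • (1 : H →L[ℂ] H) + T ^ 2 := by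
  rw [cfc_add (a := T) (fun _ : ℝ => (1 + l^2 : ℝ)) (fun x : ℝ => x^2) (by fun_prop) (by fun_prop),
    cfc_const _ _ hT, cfc_pow_id T 2 hT, Algebra.algebraMap_eq_smul_one, Complex.coe_smul]

lemma isUnit_cfc_poly (T : H →L[ℂ] H) (hT : IsSelfAdjoint T) (l : ℝ) :
    cfc (fun x : ℝ => 1 + l^2 + x^2) T * cfc (fun x : ℝ => (1 + l^2 + x^2)⁻¹) T = 1 ∧
    cfc (fun x : ℝ => (1 + l^2 + x^2)⁻¹) T * cfc (fun x : ℝ => 1 + l^2 + x^2) T = 1 := by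
  have hpos : ∀ x : ℝ, (0:ℝ) < 1 + l^2 + x^2 := fun x => by positivity
  have hcont : ContinuousOn (fun x : ℝ => (1 + l^2 + x^2)⁻¹) (spectrum ℝ T) :=
    (Continuous.inv₀ (by fun_prop) (fun x => (hpos x).ne')).continuousOn
  constructor
  · rw [← cfc_mul _ _ T (by fun_prop) hcont]
    rw [← cfc_one (R := ℝ) T hT]
    exact cfc_congr fun x _ => mul_inv_cancel₀ (hpos x).ne'
  · rw [← cfc_mul _ _ T hcont (by fun_prop)]
    rw [← cfc_one (R := ℝ) T hT]
    exact cfc_congr fun x _ => inv_mul_cancel₀ (hpos x).ne'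

lemma isUnit_shift (T : H →L[ℂ] H) (hT : IsSelfAdjoint T) (l : ℝ) :
    IsUnit (((1 + l ^ 2 : ℝ) : ℂ) • (1 : H →L[ℂ] H) + T ^ 2) := by
  obtain ⟨h1, h2⟩ := isUnit_cfc_poly T hT l
  rw [cfc_poly T hT l] at h1 h2
  exact ⟨⟨_, _, h1, h2⟩, rfl⟩

lemma resolvent2_eq_cfc (T : H →L[ℂ] H) (hT : IsSelfAdjoint T) (l : ℝ) :
    resolvent2 T l = cfc (fun x : ℝ => (1 + l^2 + x^2)⁻¹) T := by
  obtain ⟨h1, h2⟩ := isUnit_cfc_poly T hT l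
  rw [resolvent2, ← cfc_poly T hT l]
  exact Ring.inverse_unit ⟨_, _, h1, h2⟩

lemma mul_resolvent2_eq_cfc (T : H →L[ℂ] H) (hT : IsSelfAdjoint T) (l : ℝ) :
    T * resolvent2 T l = cfc (fun x : ℝ => x / (1 + l^2 + x^2)) T := by
  have hpos : ∀ x : ℝ, (0:ℝ) < 1 + l^2 + x^2 := fun x => by positivity
  have hcont : ContinuousOn (fun x : ℝ => (1 + l^2 + x^2)⁻¹) (spectrum ℝ T) :=
    (Continuous.inv₀ (by fun_prop) (fun x => (hpos x).ne')).continuousOn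
  rw [resolvent2_eq_cfc T hT l]
  nth_rewrite 1 [← cfc_id ℝ T hT]
  rw [← cfc_mul _ _ T (by fun_prop) hcont]
  exact cfc_congr fun x _ => (div_eq_mul_inv _ _).symm

lemma cont_resolvent2 (T : H →L[ℂ] H) (hT : IsSelfAdjoint T) :
    Continuous (fun l : ℝ => resolvent2 T l) := by
  refine continuous_iff_continuousAt.mpr fun l => ?_
  have h2 : ContinuousAt (fun l : ℝ => ((1 + l ^ 2 : ℝ) : ℂ) • (1 : H →L[ℂ] H) + T ^ 2) l := by
    fun_prop
  simp only [resolvent2]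
  exact ContinuousAt.comp (f := fun l : ℝ => ((1 + l ^ 2 : ℝ) : ℂ) • (1 : H →L[ℂ] H) + T ^ 2)
    (x := l) (NormedRing.inverse_continuousAt (isUnit_shift T hT l).unit) h2

lemma pointwise_bound (T : H →L[ℂ] H) [Nontrivial H] (l : ℝ) (x : ℝ)
    (hx : x ∈ spectrum ℝ T) : ‖x / (1 + l^2 + x^2)‖ ≤ ‖T‖ * (1 + l^2)⁻¹ := by
  have hx' : ‖x‖ ≤ ‖T‖ := spectrum.norm_le_norm_of_mem hx
  have h1 : (0:ℝ) < 1 + l^2 := by positivity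
  have h2 : (0:ℝ) < 1 + l^2 + x^2 := by positivity
  rw [norm_div, Real.norm_eq_abs (1 + l^2 + x^2), abs_of_pos h2, div_eq_mul_inv]
  exact mul_le_mul hx' (inv_anti₀ h1 (by linarith [sq_nonneg x]))
    (inv_nonneg.mpr h2.le) (norm_nonneg T)

end Aux

/-- The operator-valued Cauchy integral formula for the bounded transform: for a
bounded self-adjoint operator `T`, the map `l ↦ T ∘ (1 + l² + T²)⁻¹` is Bochner
integrable on `[0, ∞)` and `(2/π) ∫₀^∞ T (1 + l² + T²)⁻¹ dl = f(T)` where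
`f(x) = x / √(1 + x²)` and `f(T)` is the continuous functional calculus. -/
theorem stmt2 {H : Type*} [NormedAddCommGroup H] [InnerProductSpace ℂ H] [CompleteSpace H]
    (T : H →L[ℂ] H) (hT : IsSelfAdjoint T) :
    IntegrableOn (fun l : ℝ => T * resolvent2 T l) (Set.Ici 0) volume ∧
    ((2 / Real.pi : ℝ) : ℂ) • ∫ l in Set.Ici (0 : ℝ), T * resolvent2 T l =
      cfc (fun x : ℝ => x / Real.sqrt (1 + x ^ 2)) T := by
  rcases subsingleton_or_nontrivial H with hH | hH
  · have hsub : Subsingleton (H →L[ℂ] H) := inferInstance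
    constructor
    · have h0 : (fun l : ℝ => T * resolvent2 T l) = fun _ => 0 := Subsingleton.elim _ _
      rw [h0]
      exact integrableOn_zero
    · exact Subsingleton.elim _ _
  -- Nontrivial case
  have hpos : ∀ l x : ℝ, (0:ℝ) < 1 + l^2 + x^2 := fun l x => by positivity
  -- the continuous-map-valued family
  set σT := spectrum ℝ T with hσT
  let F : C(ℝ × σT, ℝ) :=
    ⟨fun p => (p.2 : ℝ) / (1 + p.1^2 + (p.2 : ℝ)^2),
      Continuous.div (by fun_prop) (by fun_prop) (fun p => (hpos p.1 p.2).ne')⟩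
  let G : C(ℝ, C(σT, ℝ)) := F.curry
  have hGnorm : ∀ l : ℝ, ‖G l‖ ≤ ‖T‖ * (1 + l^2)⁻¹ := by
    intro l
    refine (ContinuousMap.norm_le _ (by positivity)).mpr fun x => ?_
    exact pointwise_bound T l x x.2
  have hbound_int : Integrable (fun l : ℝ => ‖T‖ * (1 + l^2)⁻¹)
      (volume.restrict (Set.Ici (0:ℝ))) :=
    ((integrable_inv_one_add_sq).const_mul ‖T‖).restrict
  have hGint : Integrable (fun l : ℝ => G l) (volume.restrict (Set.Ici (0:ℝ))) := by
    refine Integrable.mono' hbound_int ((map_continuous G).aestronglyMeasurable.restrict) ?_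
    exact Filter.Eventually.of_forall hGnorm
  -- identification with the operator family
  have hcontl : ∀ l : ℝ, ContinuousOn (fun x : ℝ => x / (1 + l^2 + x^2)) σT := fun l =>
    (Continuous.div (by fun_prop) (by fun_prop) (fun x => (hpos l x).ne')).continuousOn
  have key : ∀ l : ℝ, T * resolvent2 T l = cfcL (R := ℝ) hT (G l) := by
    intro l
    rw [mul_resolvent2_eq_cfc T hT l, cfc_eq_cfcL hT (hcontl l)]
    congr 1
  -- integrability of the operator family
  have hopcont : Continuous (fun l : ℝ => T * resolvent2 T l) :=
    continuous_const.mul (cont_resolvent2 T hT)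
  have hopint : IntegrableOn (fun l : ℝ => T * resolvent2 T l) (Set.Ici 0) volume := by
    refine Integrable.mono' hbound_int (hopcont.aestronglyMeasurable.restrict) ?_
    refine Filter.Eventually.of_forall fun l => ?_
    rw [mul_resolvent2_eq_cfc T hT l]
    exact norm_cfc_le (by positivity) fun x hx => pointwise_bound T l x hx
  refine ⟨hopint, ?_⟩
  -- the continuous function f
  have hfcont : ContinuousOn (fun x : ℝ => x / Real.sqrt (1 + x ^ 2)) σT := by
    refine (Continuous.div continuous_id (by fun_prop) fun x => ?_).continuousOn
    exact (Real.sqrt_pos.mpr (by positivity)).ne'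
  set fcm : C(σT, ℝ) := ⟨_, hfcont.restrict⟩ with hfcm
  have hGval : ∫ l in Set.Ici (0:ℝ), G l = (Real.pi/2 : ℝ) • fcm := by
    refine ContinuousMap.ext fun x => ?_
    rw [ContinuousMap.integral_apply hGint x]
    have : ∀ l : ℝ, (G l) x = (x : ℝ) / (1 + l^2 + (x:ℝ)^2) := fun l => rfl
    simp_rw [this]
    rw [aux_int2 (x : ℝ)]
    simp [hfcm, smul_eq_mul]
  calc ((2 / Real.pi : ℝ) : ℂ) • ∫ l in Set.Ici (0 : ℝ), T * resolvent2 T l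
      = ((2 / Real.pi : ℝ) : ℂ) • ∫ l in Set.Ici (0 : ℝ), cfcL (R := ℝ) hT (G l) := by
        simp_rw [key]
    _ = ((2 / Real.pi : ℝ) : ℂ) • cfcL (R := ℝ) hT (∫ l in Set.Ici (0:ℝ), G l) := by
        rw [ContinuousLinearMap.integral_comp_comm _ hGint]
    _ = ((2 / Real.pi : ℝ) : ℂ) • ((Real.pi/2 : ℝ) • cfcL (R := ℝ) hT fcm) := by
        rw [hGval, (cfcL (R := ℝ) hT).map_smul]
    _ = cfc (fun x : ℝ => x / Real.sqrt (1 + x ^ 2)) T := by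
        rw [cfc_eq_cfcL hT hfcont, Complex.coe_smul, smul_smul]
        rw [show (2 / Real.pi) * (Real.pi / 2) = 1 by
          field_simp]
        rw [one_smul]
end

section
/- Let H be a complex Hilbert space, T a bounded self-adjoint operator on H, and a, χ bounded operators on H. Assume that (i) T∘a − a∘T = χ∘(T∘a − a∘T), (ii) (1 + T²)⁻¹∘χ is a compact operator, and (iii) T∘(1 + T²)⁻¹∘χ is a compact operator. Then f(T)∘a − a∘f(T) is a compact operator, where f(T) is the continuous functional calculus of f(x) = x/√(1 + x²) applied to T. -/
/-- Auxiliary subalgebra: continuous functions `g` on the spectrum of `T` such that the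
commutator `[g(T), a]` is a compact operator. -/
noncomputable def stmt6Aux {H : Type*} [NormedAddCommGroup H] [InnerProductSpace ℂ H]
    [CompleteSpace H] (T a : H →L[ℂ] H) (hT : IsSelfAdjoint T) :
    Subalgebra ℝ C(spectrum ℝ T, ℝ) where
  carrier := {g | IsCompactOperator ⇑(cfcHom hT g * a - a * cfcHom hT g)}
  mul_mem' := by
    intro g h hg hh
    simp only [Set.mem_setOf_eq, map_mul] at *
    have key' : cfcHom hT g * cfcHom hT h * a - a * (cfcHom hT g * cfcHom hT h) =
        cfcHom hT g * (cfcHom hT h * a - a * cfcHom hT h) +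
          (cfcHom hT g * a - a * cfcHom hT g) * cfcHom hT h := by noncomm_ring
    rw [key']
    exact (hh.clm_comp _).add (hg.comp_clm _)
  add_mem' := by
    intro g h hg hh
    simp only [Set.mem_setOf_eq, map_add] at *
    have key' : (cfcHom hT g + cfcHom hT h) * a - a * (cfcHom hT g + cfcHom hT h) =
        (cfcHom hT g * a - a * cfcHom hT g) + (cfcHom hT h * a - a * cfcHom hT h) := by
      noncomm_ring
    rw [key']
    exact hg.add hh
  algebraMap_mem' := by
    intro r
    show IsCompactOperator
      ⇑(cfcHom hT ((algebraMap ℝ C(spectrum ℝ T, ℝ)) r) * a -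
        a * cfcHom hT ((algebraMap ℝ C(spectrum ℝ T, ℝ)) r))
    rw [AlgHomClass.commutes]
    have key' : algebraMap ℝ (H →L[ℂ] H) r * a - a * algebraMap ℝ (H →L[ℂ] H) r = 0 := by
      rw [Algebra.commutes, sub_self]
    rw [key']
    exact isCompactOperator_zero

lemma stmt6Aux_mem {H : Type*} [NormedAddCommGroup H] [InnerProductSpace ℂ H]
    [CompleteSpace H] (T a : H →L[ℂ] H) (hT : IsSelfAdjoint T) (g : C(spectrum ℝ T, ℝ)) :
    g ∈ stmt6Aux T a hT ↔ IsCompactOperator ⇑(cfcHom hT g * a - a * cfcHom hT g) :=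
  Iff.rfl

/-- Abstract form of the compact-commutator argument in the construction of the
transverse Dirac class: if `T` is bounded self-adjoint, `[T, a] = χ [T, a]`,
`(1 + T²)⁻¹ χ` is compact and `T (1 + T²)⁻¹ χ` is compact, then the commutator
`[f(T), a]` is compact, where `f(x) = x / √(1 + x²)` is applied to `T` via the
continuous functional calculus. -/
theorem stmt6 {H : Type*} [NormedAddCommGroup H] [InnerProductSpace ℂ H] [CompleteSpace H]
    (T a χ : H →L[ℂ] H) (hT : IsSelfAdjoint T)
    (h1 : T * a - a * T = χ * (T * a - a * T))
    (h2 : IsCompactOperator ⇑(Ring.inverse ((1 : H →L[ℂ] H) + T ^ 2) * χ))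
    (h3 : IsCompactOperator ⇑(T * Ring.inverse ((1 : H →L[ℂ] H) + T ^ 2) * χ)) :
    IsCompactOperator ⇑(cfc (fun x : ℝ => x / Real.sqrt (1 + x ^ 2)) T * a -
      a * cfc (fun x : ℝ => x / Real.sqrt (1 + x ^ 2)) T) := by
  clear h3
  -- Basic facts about `R = (1 + T²)⁻¹`.
  set R := Ring.inverse ((1 : H →L[ℂ] H) + T ^ 2) with hRdef
  have key : cfc (fun x : ℝ => 1 + x ^ 2) T = 1 + T ^ 2 := by
    rw [cfc_const_add 1 (fun x : ℝ => x ^ 2) T (by fun_prop) hT, cfc_pow_id T 2 hT, map_one]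
  have hu : IsUnit ((1 : H →L[ℂ] H) + T ^ 2) :=
    key ▸ isUnit_cfc (fun x : ℝ => 1 + x ^ 2) T (by fun_prop) hT (fun x _ => by positivity)
  have hgr_cont : ContinuousOn (fun x : ℝ => (1 + x ^ 2)⁻¹) (spectrum ℝ T) :=
    (((continuous_const.add (continuous_pow 2)).inv₀ fun (x : ℝ) => (by positivity : (1:ℝ) + x ^ 2 ≠ 0))).continuousOn
  have hR : R = cfc (fun x : ℝ => (1 + x ^ 2)⁻¹) T := by
    rw [hRdef, ← key,
      ← cfc_inv (f := fun x : ℝ => 1 + x ^ 2) (a := T) (fun x _ => by positivity) (by fun_prop) hT]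
  have hTR : T * R = R * T := by
    have h0 : Commute T ((1 : H →L[ℂ] H) + T ^ 2) :=
      (Commute.one_right T).add_right ((Commute.refl T).pow_right 2)
    have hRu : R = ↑hu.unit⁻¹ := by
      rw [hRdef]
      conv_lhs => rw [← hu.unit_spec]
      exact Ring.inverse_unit hu.unit
    have h0' : Commute T ↑hu.unit := by rw [hu.unit_spec]; exact h0
    rw [hRu]
    exact h0'.units_inv_right.eq
  have hc1 : R * ((1 : H →L[ℂ] H) + T ^ 2) = 1 := Ring.inverse_mul_cancel _ hu
  have hc2 : ((1 : H →L[ℂ] H) + T ^ 2) * R = 1 := Ring.mul_inverse_cancel _ hu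
  have swap : ∀ X : H →L[ℂ] H, T * (R * X) = R * (T * X) := fun X => by
    rw [← mul_assoc, ← mul_assoc, hTR]
  set B := T * a - a * T with hBdef
  -- `R B` is compact.
  have hRB : IsCompactOperator ⇑(R * B) := by
    rw [h1, ← mul_assoc]
    exact h2.comp_clm B
  -- `[R, a]` is compact.
  have com_r : IsCompactOperator ⇑(R * a - a * R) := by
    have idr : R * a - a * R = -(T * ((R * B) * R)) - (R * B) * (T * R) := by
      have e0 : R * a = R * (a * (((1 : H →L[ℂ] H) + T ^ 2) * R)) := by rw [hc2, mul_one]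
      have e1 : a * R = R * (((1 : H →L[ℂ] H) + T ^ 2) * (a * R)) := by
        rw [← mul_assoc, hc1, one_mul]
      rw [hBdef, e0, e1, mul_assoc R (T * a - a * T) R, swap ((T * a - a * T) * R)]
      noncomm_ring
    rw [idr]
    exact (((hRB.comp_clm R).clm_comp T).neg).sub (hRB.comp_clm (T * R))
  -- `[T R, a]` is compact.
  have com_s : IsCompactOperator ⇑((T * R) * a - a * (T * R)) := by
    have ids : (T * R) * a - a * (T * R) = R * B + (R * a - a * R) * T := by
      rw [hBdef, hTR]
      noncomm_ring
    rw [ids]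
    exact hRB.add (com_r.comp_clm T)
  -- The subalgebra of continuous functions `g` with `[g(T), a]` compact.
  have hgs_cont : ContinuousOn (fun x : ℝ => x * (1 + x ^ 2)⁻¹) (spectrum ℝ T) :=
    continuousOn_id.mul hgr_cont
  have hcfc_r : cfc (fun x : ℝ => (1 + x ^ 2)⁻¹) T = R := hR.symm
  have hcfc_s : cfc (fun x : ℝ => x * (1 + x ^ 2)⁻¹) T = T * R := by
    rw [cfc_mul (fun x : ℝ => x) (fun x : ℝ => (1 + x ^ 2)⁻¹) T (by fun_prop) hgr_cont,
      cfc_id' ℝ T hT, hcfc_r]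
  set S : Subalgebra ℝ C(spectrum ℝ T, ℝ) := stmt6Aux T a hT with hSdef
  have hclosed : IsClosed (S : Set C(spectrum ℝ T, ℝ)) := by
    have hset : (S : Set C(spectrum ℝ T, ℝ)) =
        (fun g : C(spectrum ℝ T, ℝ) => cfcHom hT g * a - a * cfcHom hT g) ⁻¹'
          {f : H →L[ℂ] H | IsCompactOperator ⇑f} := rfl
    rw [hset]
    exact isClosed_setOf_isCompactOperator.preimage
      (((cfcHom_isClosedEmbedding hT).continuous.mul continuous_const).sub
        (continuous_const.mul (cfcHom_isClosedEmbedding hT).continuous))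
  have hmem_r : (⟨_, hgr_cont.restrict⟩ : C(spectrum ℝ T, ℝ)) ∈ S := by
    show IsCompactOperator _
    rw [← cfc_apply (fun x : ℝ => (1 + x ^ 2)⁻¹) T hT hgr_cont, hcfc_r]
    exact com_r
  have hmem_s : (⟨_, hgs_cont.restrict⟩ : C(spectrum ℝ T, ℝ)) ∈ S := by
    show IsCompactOperator _
    rw [← cfc_apply (fun x : ℝ => x * (1 + x ^ 2)⁻¹) T hT hgs_cont, hcfc_s]
    exact com_s
  have hsep : S.SeparatesPoints := by
    intro x y hxy
    by_cases hsq : ((x : ℝ)) ^ 2 = ((y : ℝ)) ^ 2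
    · refine ⟨_, ⟨_, hmem_s, rfl⟩, ?_⟩
      intro heq
      have hne : ((1 : ℝ) + (x : ℝ) ^ 2)⁻¹ ≠ 0 := by positivity
      have : (x : ℝ) * (1 + (x : ℝ) ^ 2)⁻¹ = (y : ℝ) * (1 + (y : ℝ) ^ 2)⁻¹ := heq
      rw [← hsq] at this
      exact hxy (Subtype.ext (mul_right_cancel₀ hne this))
    · refine ⟨_, ⟨_, hmem_r, rfl⟩, ?_⟩
      intro heq
      have : ((1 : ℝ) + (x : ℝ) ^ 2)⁻¹ = (1 + (y : ℝ) ^ 2)⁻¹ := heq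
      have h' : (1 : ℝ) + (x : ℝ) ^ 2 = 1 + (y : ℝ) ^ 2 := by
        have hx : (0:ℝ) < 1 + (x : ℝ) ^ 2 := by positivity
        have hy : (0:ℝ) < 1 + (y : ℝ) ^ 2 := by positivity
        field_simp at this
        linarith [this]
      exact hsq (by linarith)
  have htop : S = ⊤ := by
    have hcl := ContinuousMap.subalgebra_topologicalClosure_eq_top_of_separatesPoints S hsep
    rw [← hcl]
    exact le_antisymm (Subalgebra.le_topologicalClosure S)
      (Subalgebra.topologicalClosure_minimal le_rfl hclosed)
  -- Conclude for `f(x) = x / √(1 + x²)`.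
  have hfs : Continuous (fun x : ℝ => x / Real.sqrt (1 + x ^ 2)) := by
    refine continuous_id.div (Real.continuous_sqrt.comp (continuous_const.add (continuous_pow 2)))
      fun x => ?_
    exact (Real.sqrt_pos.mpr (by positivity)).ne'
  rw [cfc_apply (fun x : ℝ => x / Real.sqrt (1 + x ^ 2)) T hT hfs.continuousOn]
  have : (⟨_, hfs.continuousOn.restrict⟩ : C(spectrum ℝ T, ℝ)) ∈ S := htop ▸ Algebra.mem_top
  exact this
end

section
/- Let H be a complex Hilbert space, S and T bounded self-adjoint operators on H, and a, χ bounded operators on H. Set B = S∘a − a∘T, and assume that (i) B = χ∘B, (ii) (1 + S²)⁻¹∘χ is a compact operator, and (iii) S∘(1 + S²)⁻¹∘χ is a compact operator. Then f(S)∘a − a∘f(T) is a compact operator, where f(S), f(T) denote the continuous functional calculus of f(x) = x/√(1 + x²) applied to S and T respectively. -/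
set_option maxHeartbeats 1000000
set_option synthInstance.maxHeartbeats 400000

section RingAux

variable {A : Type*} [Ring A]

private lemma stmt7_aux_comm (S RS : A) (hl : RS * (1 + S^2) = 1) (hr : (1 + S^2) * RS = 1) :
    S * RS = RS * S := by
  calc S * RS = (RS * (1 + S^2)) * (S * RS) := by rw [hl, one_mul]
    _ = RS * ((1 + S^2) * S * RS) := by simp only [mul_assoc]
    _ = RS * (S * (1 + S^2) * RS) := by rw [show (1 + S^2) * S = S * (1 + S^2) by noncomm_ring]
    _ = (RS * S) * ((1 + S^2) * RS) := by simp only [mul_assoc]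
    _ = RS * S := by rw [hr, mul_one]

private lemma stmt7_aux_key1 (S T a RS RT : A) (hl : RS * (1 + S^2) = 1)
    (hr : (1 + T^2) * RT = 1) (hc : S * RS = RS * S) :
    S * RS * a - a * (T * RT)
      = RS * ((S*a - a*T) - S*((S*a - a*T))*T) * RT := by
  have expand : RS * ((S*a - a*T) - S*((S*a - a*T))*T) * RT
      = RS * (S*a*(1+T^2)) * RT - RS * ((1+S^2)*(a*T)) * RT := by noncomm_ring
  have t1 : RS * (S*a*(1+T^2)) * RT = S * RS * a := by
    calc RS * (S*a*(1+T^2)) * RT = RS * (S * (a * ((1+T^2) * RT))) := by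
          simp only [mul_assoc]
      _ = RS * (S * a) := by rw [hr, mul_one]
      _ = S * RS * a := by rw [← mul_assoc, ← hc, mul_assoc]
  have t2 : RS * ((1+S^2)*(a*T)) * RT = a * (T * RT) := by
    rw [← mul_assoc RS (1+S^2) (a*T), hl, one_mul, mul_assoc]
  rw [expand, t1, t2]

private lemma stmt7_aux_key2 (S T a RS RT : A) (hl : RS * (1 + S^2) = 1)
    (hr : (1 + T^2) * RT = 1) :
    RS * a - a * RT
      = RS * (-((S*a - a*T)*T) - S*(S*a - a*T)) * RT := by
  have expand : RS * (-((S*a - a*T)*T) - S*(S*a - a*T)) * RT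
      = RS * (a*(1+T^2)) * RT - RS * ((1+S^2)*a) * RT := by noncomm_ring
  have t1 : RS * (a*(1+T^2)) * RT = RS * a := by
    calc RS * (a*(1+T^2)) * RT = RS * (a * ((1+T^2) * RT)) := by simp only [mul_assoc]
      _ = RS * a := by rw [hr, mul_one]
  have t2 : RS * ((1+S^2)*a) * RT = a * RT := by
    rw [← mul_assoc RS (1+S^2) a, hl, one_mul]
  rw [expand, t1, t2]

private lemma stmt7_aux_e1 (S T a χ RS RT : A) (hc : S * RS = RS * S) :
    RS * ((χ*(S*a - a*T)) - S*((χ*(S*a - a*T)))*T) * RT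
      = (RS*χ)*((S*a - a*T)*RT) - (S*RS*χ)*((S*a - a*T)*(T*RT)) := by
  rw [hc]; noncomm_ring

private lemma stmt7_aux_e2 (S T a χ RS RT : A) (hc : S * RS = RS * S) :
    RS * (-((χ*(S*a - a*T))*T) - S*(χ*(S*a - a*T))) * RT
      = -((RS*χ)*((S*a - a*T)*(T*RT))) - (S*RS*χ)*((S*a - a*T)*RT) := by
  rw [hc]; noncomm_ring

private lemma stmt7_aux_step (S T a RS RT P Q : A) :
    S*(RS*(P*RS))*a - a*(T*(RT*(Q*RT)))
      = ((S*(RS*P))*a - a*(T*(RT*Q)))*RT + (S*(RS*P))*(RS*a - a*RT) := by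
  noncomm_ring

private lemma stmt7_aux_add (S T a RS RT P Q P' Q' : A) :
    (S*(RS*(P+P')))*a - a*(T*(RT*(Q+Q')))
      = ((S*(RS*P))*a - a*(T*(RT*Q))) + ((S*(RS*P'))*a - a*(T*(RT*Q'))) := by
  noncomm_ring

private lemma stmt7_aux_GD (P P' Q Q' a : A) :
    (P*a - a*Q) - (P'*a - a*Q') = (P - P')*a - a*(Q - Q') := by noncomm_ring

end RingAux

section RingSmulAux

variable {A : Type*} [Ring A] [Algebra ℝ A]

private lemma stmt7_aux_smul (S T a RS RT P Q : A) (r : ℝ) :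
    (S*(RS*(r • P)))*a - a*(T*(RT*(r • Q)))
      = r • ((S*(RS*P))*a - a*(T*(RT*Q))) := by
  simp only [mul_smul_comm, smul_mul_assoc, smul_sub]

end RingSmulAux

section CfcAux

variable {H : Type*} [NormedAddCommGroup H] [InnerProductSpace ℂ H] [CompleteSpace H]

private lemma stmt7_cfc_one_add_sq (S : H →L[ℂ] H) (hS : IsSelfAdjoint S) :
    cfc (fun x : ℝ => 1 + x^2) S = 1 + S^2 := by
  rw [cfc_add S (fun _ => 1) (fun x => x^2), cfc_const_one ℝ S, cfc_pow_id S 2]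

private lemma stmt7_isUnit (S : H →L[ℂ] H) (hS : IsSelfAdjoint S) :
    IsUnit ((1 : H →L[ℂ] H) + S^2) := by
  rw [← stmt7_cfc_one_add_sq S hS]
  exact (cfcUnits (fun x : ℝ => 1 + x^2) S (fun x _ => by positivity)).isUnit

private lemma stmt7_cfc_u (S : H →L[ℂ] H) (hS : IsSelfAdjoint S) :
    cfc (fun x : ℝ => (1 + x^2)⁻¹) S = Ring.inverse (1 + S^2) := by
  rw [← stmt7_cfc_one_add_sq S hS,
    ← cfc_inv (a := S) (f := fun x : ℝ => 1 + x^2) (fun x _ => by positivity)]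

private lemma stmt7_cfc_gq (S : H →L[ℂ] H) (hS : IsSelfAdjoint S) (q : Polynomial ℝ) :
    cfc (fun x : ℝ => x * ((1+x^2)⁻¹ * q.eval ((1+x^2)⁻¹))) S
      = S * (Ring.inverse (1 + S^2) * Polynomial.aeval (Ring.inverse (1 + S^2)) q) := by
  have hu_cont : ContinuousOn (fun x : ℝ => (1+x^2)⁻¹) (spectrum ℝ S) :=
    Continuous.continuousOn <| (continuous_const.add (continuous_pow 2)).inv₀
      (fun x => (by positivity : (1:ℝ) + x ^ 2 ≠ 0))
  have hq_cont : ContinuousOn (fun x : ℝ => q.eval ((1+x^2)⁻¹)) (spectrum ℝ S) :=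
    (q.continuous_aeval.comp ((continuous_const.add (continuous_pow 2)).inv₀
      (fun x => (by positivity : (1:ℝ) + x ^ 2 ≠ 0)))).continuousOn
  have hprod_cont : ContinuousOn (fun x : ℝ => (1+x^2)⁻¹ * q.eval ((1+x^2)⁻¹))
      (spectrum ℝ S) := hu_cont.mul hq_cont
  rw [cfc_mul (fun x : ℝ => x) (fun x : ℝ => (1+x^2)⁻¹ * q.eval ((1+x^2)⁻¹)) S
      continuousOn_id hprod_cont,
    cfc_mul (fun x : ℝ => (1+x^2)⁻¹) (fun x : ℝ => q.eval ((1+x^2)⁻¹)) S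
      hu_cont hq_cont,
    cfc_id' ℝ S hS, cfc_map_polynomial q (fun x : ℝ => (1+x^2)⁻¹) S hS hu_cont,
    stmt7_cfc_u S hS]

private lemma stmt7_spec_abs_le (S : H →L[ℂ] H) {x : ℝ} (hx : x ∈ spectrum ℝ S) :
    |x| ≤ ‖S‖ := by
  have h := spectrum.norm_le_norm_mul_of_mem hx
  have h1 : ‖(1 : H →L[ℂ] H)‖ ≤ 1 := ContinuousLinearMap.norm_id_le
  calc |x| = ‖x‖ := (Real.norm_eq_abs x).symm
    _ ≤ ‖S‖ * ‖(1 : H →L[ℂ] H)‖ := h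
    _ ≤ ‖S‖ * 1 := mul_le_mul_of_nonneg_left h1 (norm_nonneg S)
    _ = ‖S‖ := mul_one _

end CfcAux

private lemma stmt7_pointwise {M δ : ℝ} (hM : 0 ≤ M) (q : Polynomial ℝ)
    (hq : ∀ y ∈ Set.Icc ((1+M^2)⁻¹) 1, |q.eval y - (Real.sqrt y)⁻¹| ≤ δ)
    {x : ℝ} (hx : |x| ≤ M) :
    |x / Real.sqrt (1 + x^2) - x * ((1+x^2)⁻¹ * q.eval ((1+x^2)⁻¹))| ≤ M * δ := by
  set u : ℝ := (1 + x^2)⁻¹ with hu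
  have hu0 : 0 < u := by rw [hu]; positivity
  have hu1 : u ≤ 1 := by
    rw [hu]
    have h : (1:ℝ) ≤ 1 + x^2 := le_add_of_nonneg_right (sq_nonneg x)
    exact inv_le_one_of_one_le₀ h
  have huM : (1+M^2)⁻¹ ≤ u := by
    rw [hu]
    have hx2 : x^2 ≤ M^2 := by
      rw [← sq_abs x]
      exact pow_le_pow_left₀ (abs_nonneg x) hx 2
    have h2 : (1:ℝ) + x^2 ≤ 1 + M^2 := by linarith
    exact inv_anti₀ (by positivity) h2
  have hs0 : Real.sqrt u ≠ 0 := Real.sqrt_ne_zero'.mpr hu0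
  have h2 : u * (Real.sqrt u)⁻¹ = Real.sqrt u := by
    field_simp
    rw [Real.sq_sqrt hu0.le]
  have hsq : x / Real.sqrt (1 + x^2) = x * (u * (Real.sqrt u)⁻¹) := by
    rw [h2, hu, Real.sqrt_inv, div_eq_mul_inv]
  have hdiff : x / Real.sqrt (1 + x^2) - x * (u * q.eval u)
      = x * (u * ((Real.sqrt u)⁻¹ - q.eval u)) := by
    rw [hsq]; ring
  rw [hdiff, abs_mul, abs_mul, abs_of_pos hu0]
  have hqb : |(Real.sqrt u)⁻¹ - q.eval u| ≤ δ := by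
    rw [abs_sub_comm]
    exact hq u ⟨huM, hu1⟩
  calc |x| * (u * |(Real.sqrt u)⁻¹ - q.eval u|) ≤ M * (1 * δ) := by
        apply mul_le_mul hx _ (by positivity) hM
        exact mul_le_mul hu1 hqb (abs_nonneg _) one_pos.le
    _ = M * δ := by ring

/-- Abstract form of the `F`-connection verification: if `S`, `T` are bounded
self-adjoint operators, `B = S a − a T` satisfies `B = χ B`, `(1 + S²)⁻¹ χ` is
compact and `S (1 + S²)⁻¹ χ` is compact, then `f(S) a − a f(T)` is compact, where
`f(x) = x / √(1 + x²)` is applied via the continuous functional calculus. -/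
theorem stmt7 {H : Type*} [NormedAddCommGroup H] [InnerProductSpace ℂ H] [CompleteSpace H]
    (S T a χ : H →L[ℂ] H) (hS : IsSelfAdjoint S) (hT : IsSelfAdjoint T)
    (h1 : S * a - a * T = χ * (S * a - a * T))
    (h2 : IsCompactOperator ⇑(Ring.inverse ((1 : H →L[ℂ] H) + S ^ 2) * χ))
    (h3 : IsCompactOperator ⇑(S * Ring.inverse ((1 : H →L[ℂ] H) + S ^ 2) * χ)) :
    IsCompactOperator ⇑(cfc (fun x : ℝ => x / Real.sqrt (1 + x ^ 2)) S * a -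
      a * cfc (fun x : ℝ => x / Real.sqrt (1 + x ^ 2)) T) := by
  set RS : H →L[ℂ] H := Ring.inverse ((1 : H →L[ℂ] H) + S ^ 2) with hRSdef
  set RT : H →L[ℂ] H := Ring.inverse ((1 : H →L[ℂ] H) + T ^ 2) with hRTdef
  have hUS := stmt7_isUnit S hS
  have hUT := stmt7_isUnit T hT
  have hlS : RS * (1 + S^2) = 1 := Ring.inverse_mul_cancel _ hUS
  have hrS : (1 + S^2) * RS = 1 := Ring.mul_inverse_cancel _ hUS
  have hlT : RT * (1 + T^2) = 1 := Ring.inverse_mul_cancel _ hUT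
  have hrT : (1 + T^2) * RT = 1 := Ring.mul_inverse_cancel _ hUT
  have hc : S * RS = RS * S := stmt7_aux_comm S RS hlS hrS
  -- compactness of the basic commutator
  have hC1 : IsCompactOperator ⇑(S * RS * a - a * (T * RT)) := by
    rw [stmt7_aux_key1 S T a RS RT hlS hrT hc]
    rw [show RS * ((S*a - a*T) - S*((S*a - a*T))*T) * RT
        = RS * ((χ*(S*a - a*T)) - S*((χ*(S*a - a*T)))*T) * RT by rw [← h1],
      stmt7_aux_e1 S T a χ RS RT hc]
    exact (h2.comp_clm _).sub (h3.comp_clm _)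
  -- compactness of E = RS a - a RT
  have hE : IsCompactOperator ⇑(RS * a - a * RT) := by
    rw [stmt7_aux_key2 S T a RS RT hlS hrT]
    rw [show RS * (-((S*a - a*T)*T) - S*(S*a - a*T)) * RT
        = RS * (-((χ*(S*a - a*T))*T) - S*(χ*(S*a - a*T))) * RT by rw [← h1],
      stmt7_aux_e2 S T a χ RS RT hc]
    exact ((h2.comp_clm _).neg).sub (h3.comp_clm _)
  -- all higher commutators
  have hCk : ∀ k : ℕ, IsCompactOperator ⇑((S * (RS * RS^k)) * a - a * (T * (RT * RT^k))) := by
    intro k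
    induction k with
    | zero =>
      simp only [pow_zero, mul_one]
      exact hC1
    | succ n ih =>
      rw [pow_succ RS n, pow_succ RT n, stmt7_aux_step S T a RS RT (RS^n) (RT^n)]
      exact (ih.comp_clm RT).add (hE.clm_comp (S * (RS * RS^n)))
  -- polynomial commutators
  have hDq : ∀ q : Polynomial ℝ,
      IsCompactOperator ⇑((S * (RS * Polynomial.aeval RS q)) * a
        - a * (T * (RT * Polynomial.aeval RT q))) := by
    intro q
    induction q using Polynomial.induction_on with
    | C r =>
      have haevS : Polynomial.aeval RS (Polynomial.C r) = r • (1 : H →L[ℂ] H) := by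
        rw [Polynomial.aeval_C, Algebra.algebraMap_eq_smul_one]
      have haevT : Polynomial.aeval RT (Polynomial.C r) = r • (1 : H →L[ℂ] H) := by
        rw [Polynomial.aeval_C, Algebra.algebraMap_eq_smul_one]
      have e : (S * (RS * Polynomial.aeval RS (Polynomial.C r))) * a
          - a * (T * (RT * Polynomial.aeval RT (Polynomial.C r)))
          = r • ((S * (RS * RS^0)) * a - a * (T * (RT * RT^0))) := by
        rw [pow_zero, pow_zero, haevS, haevT, stmt7_aux_smul]
      rw [e]
      exact (hCk 0).smul r
    | add p q hp hq =>
      rw [map_add, map_add, stmt7_aux_add]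
      exact hp.add hq
    | monomial n r _ =>
      have haevS : Polynomial.aeval RS (Polynomial.C r * Polynomial.X^(n+1))
          = r • RS^(n+1) := by
        rw [map_mul, Polynomial.aeval_C, map_pow, Polynomial.aeval_X,
          Algebra.algebraMap_eq_smul_one, smul_mul_assoc, one_mul]
      have haevT : Polynomial.aeval RT (Polynomial.C r * Polynomial.X^(n+1))
          = r • RT^(n+1) := by
        rw [map_mul, Polynomial.aeval_C, map_pow, Polynomial.aeval_X,
          Algebra.algebraMap_eq_smul_one, smul_mul_assoc, one_mul]
      have e : (S * (RS * Polynomial.aeval RS (Polynomial.C r * Polynomial.X^(n+1)))) * a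
          - a * (T * (RT * Polynomial.aeval RT (Polynomial.C r * Polynomial.X^(n+1))))
          = r • ((S * (RS * RS^(n+1))) * a - a * (T * (RT * RT^(n+1)))) := by
        rw [haevS, haevT, stmt7_aux_smul]
      rw [e]
      exact (hCk (n+1)).smul r
  -- approximation
  set f : ℝ → ℝ := fun x : ℝ => x / Real.sqrt (1 + x ^ 2) with hfdef
  have hf_cont : Continuous f := by
    apply continuous_id.div (Real.continuous_sqrt.comp (by fun_prop))
    intro x
    exact Real.sqrt_ne_zero'.mpr (by positivity)
  set M : ℝ := max ‖S‖ ‖T‖ with hMdef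
  have hM0 : (0:ℝ) ≤ M := le_trans (norm_nonneg S) (le_max_left _ _)
  have hεM : (0:ℝ) < (1+M^2)⁻¹ := by positivity
  have hmem : (cfc f S * a - a * cfc f T)
      ∈ closure {F : H →L[ℂ] H | IsCompactOperator ⇑F} := by
    rw [Metric.mem_closure_iff]
    intro ε hε
    set Dd : ℝ := 2*(M+1)*(‖a‖+1) with hDdef
    have hD : (0:ℝ) < Dd := by positivity
    have hδ : (0:ℝ) < ε / Dd := by positivity
    obtain ⟨q, hq⟩ := exists_polynomial_near_of_continuousOn ((1+M^2)⁻¹) 1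
      (fun y => (Real.sqrt y)⁻¹)
      ((Real.continuous_sqrt.continuousOn).inv₀ fun y hy =>
        Real.sqrt_ne_zero'.mpr (lt_of_lt_of_le hεM hy.1)) (ε / Dd) hδ
    have hq' : ∀ y ∈ Set.Icc ((1+M^2)⁻¹) 1, |q.eval y - (Real.sqrt y)⁻¹| ≤ ε / Dd :=
      fun y hy => (hq y hy).le
    set g : ℝ → ℝ := fun x : ℝ => x * ((1+x^2)⁻¹ * q.eval ((1+x^2)⁻¹)) with hgdef
    have hg_cont : Continuous g := by
      apply continuous_id.mul
      apply Continuous.mul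
      · exact (continuous_const.add (continuous_pow 2)).inv₀ (fun x => (by positivity : (1:ℝ) + x ^ 2 ≠ 0))
      · exact q.continuous_aeval.comp ((continuous_const.add (continuous_pow 2)).inv₀
          (fun x => (by positivity : (1:ℝ) + x ^ 2 ≠ 0)))
    refine ⟨(S * (RS * Polynomial.aeval RS q)) * a - a * (T * (RT * Polynomial.aeval RT q)),
      hDq q, ?_⟩
    have hbound : ∀ (X : H →L[ℂ] H), IsSelfAdjoint X → ‖X‖ ≤ M →
        ‖cfc f X - cfc g X‖ ≤ M * (ε / Dd) := by
      intro X hX hXM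
      have hsub : cfc f X - cfc g X = cfc (fun x => f x - g x) X :=
        (cfc_sub f g X hf_cont.continuousOn hg_cont.continuousOn).symm
      rw [hsub]
      apply norm_cfc_le (by positivity)
      intro x hx
      rw [Real.norm_eq_abs]
      exact stmt7_pointwise hM0 q hq' ((stmt7_spec_abs_le X hx).trans hXM)
    have hbS : ‖cfc f S - cfc g S‖ ≤ M * (ε / Dd) := hbound S hS (le_max_left _ _)
    have hbT : ‖cfc f T - cfc g T‖ ≤ M * (ε / Dd) := hbound T hT (le_max_right _ _)
    have hcfcS : cfc g S = S * (RS * Polynomial.aeval RS q) := stmt7_cfc_gq S hS q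
    have hcfcT : cfc g T = T * (RT * Polynomial.aeval RT q) := stmt7_cfc_gq T hT q
    rw [dist_eq_norm]
    rw [show (cfc f S * a - a * cfc f T)
        - ((S * (RS * Polynomial.aeval RS q)) * a - a * (T * (RT * Polynomial.aeval RT q)))
        = (cfc f S - cfc g S) * a - a * (cfc f T - cfc g T) by
      rw [← hcfcS, ← hcfcT]; exact stmt7_aux_GD _ _ _ _ _]
    calc ‖(cfc f S - cfc g S) * a - a * (cfc f T - cfc g T)‖
        ≤ ‖(cfc f S - cfc g S) * a‖ + ‖a * (cfc f T - cfc g T)‖ := norm_sub_le _ _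
      _ ≤ ‖cfc f S - cfc g S‖ * ‖a‖ + ‖a‖ * ‖cfc f T - cfc g T‖ := by
          gcongr <;> exact norm_mul_le _ _
      _ ≤ (M * (ε / Dd)) * ‖a‖ + ‖a‖ * (M * (ε / Dd)) := by gcongr
      _ = (2 * M * ‖a‖) * (ε / Dd) := by ring
      _ < Dd * (ε / Dd) := by
          apply mul_lt_mul_of_pos_right _ hδ
          have ha0 : (0:ℝ) ≤ ‖a‖ := norm_nonneg a
          nlinarith
      _ = ε := by field_simp
  have hclosed : IsClosed {F : H →L[ℂ] H | IsCompactOperator ⇑F} :=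
    isClosed_setOf_isCompactOperator
  rw [hclosed.closure_eq] at hmem
  exact hmem
end

section
/- Let H be a complex Hilbert space, ι an index type, (f_i)_{i ∈ ι} a family of bounded self-adjoint operators on H such that for every u ∈ H the family (‖f_i u‖²)_{i ∈ ι} is summable with sum ‖u‖², and (T_i)_{i ∈ ι} a family of bounded operators on H with ‖T_i‖ ≤ C for all i, where C ≥ 0. Then for every u ∈ H the family (f_i(T_i(f_i u)))_{i ∈ ι} is summable in H, and the map sending u to its sum is a bounded linear operator on H of operator norm at most C. -/
open scoped InnerProductSpace

section Aux

variable {H : Type*} [NormedAddCommGroup H] [InnerProductSpace ℂ H] [CompleteSpace H]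
    {ι : Type*}

lemma stmt8_key (f : ι → H →L[ℂ] H) (hf_sa : ∀ i, IsSelfAdjoint (f i))
    (hf_sum : ∀ u : H, HasSum (fun i => ‖f i u‖ ^ 2) (‖u‖ ^ 2))
    (T : ι → H →L[ℂ] H) (C : ℝ) (hC : 0 ≤ C) (hT : ∀ i, ‖T i‖ ≤ C)
    (s : Finset ι) (u : H) :
    ‖∑ i ∈ s, f i (T i (f i u))‖ ≤ C * Real.sqrt (∑ i ∈ s, ‖f i u‖ ^ 2) := by
  set w := ∑ i ∈ s, f i (T i (f i u)) with hw
  have key : ∀ v : H, ‖⟪w, v⟫_ℂ‖ ≤ C * Real.sqrt (∑ i ∈ s, ‖f i u‖ ^ 2) * ‖v‖ := by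
    intro v
    have h1 : ⟪w, v⟫_ℂ = ∑ i ∈ s, ⟪T i (f i u), f i v⟫_ℂ := by
      rw [hw, sum_inner]
      refine Finset.sum_congr rfl fun i _ => ?_
      exact (hf_sa i).isSymmetric (T i (f i u)) v
    rw [h1]
    calc ‖∑ i ∈ s, ⟪T i (f i u), f i v⟫_ℂ‖ ≤ ∑ i ∈ s, ‖⟪T i (f i u), f i v⟫_ℂ‖ :=
          norm_sum_le _ _
      _ ≤ ∑ i ∈ s, (C * ‖f i u‖) * ‖f i v‖ := by
          refine Finset.sum_le_sum fun i _ => ?_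
          refine le_trans (norm_inner_le_norm _ _) ?_
          have h2 : ‖T i (f i u)‖ ≤ C * ‖f i u‖ :=
            le_trans ((T i).le_opNorm _) (by gcongr; exact hT i)
          exact mul_le_mul_of_nonneg_right h2 (norm_nonneg _)
      _ ≤ Real.sqrt (∑ i ∈ s, (C * ‖f i u‖) ^ 2) * Real.sqrt (∑ i ∈ s, ‖f i v‖ ^ 2) :=
          Real.sum_mul_le_sqrt_mul_sqrt _ _ _
      _ ≤ C * Real.sqrt (∑ i ∈ s, ‖f i u‖ ^ 2) * ‖v‖ := by
          have e1 : Real.sqrt (∑ i ∈ s, (C * ‖f i u‖) ^ 2)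
              = C * Real.sqrt (∑ i ∈ s, ‖f i u‖ ^ 2) := by
            rw [← Real.sqrt_sq hC, ← Real.sqrt_mul (sq_nonneg C), Finset.mul_sum]
            congr 1
            exact Finset.sum_congr rfl fun i _ => by
              rw [mul_pow, Real.sq_sqrt (sq_nonneg C)]
          rw [e1]
          refine mul_le_mul_of_nonneg_left ?_ (by positivity)
          have h3 : ∑ i ∈ s, ‖f i v‖ ^ 2 ≤ ‖v‖ ^ 2 :=
            sum_le_hasSum s (fun i _ => by positivity) (hf_sum v)
          calc Real.sqrt (∑ i ∈ s, ‖f i v‖ ^ 2) ≤ Real.sqrt (‖v‖ ^ 2) :=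
                Real.sqrt_le_sqrt h3
            _ = ‖v‖ := Real.sqrt_sq (norm_nonneg v)
  have h4 := key w
  have h5 : ‖⟪w, w⟫_ℂ‖ = ‖w‖ * ‖w‖ := by
    rw [inner_self_eq_norm_sq_to_K (𝕜 := ℂ) w, norm_pow, RCLike.norm_ofReal, abs_norm, sq]
  rw [h5] at h4
  rcases eq_or_lt_of_le (norm_nonneg w) with h0 | h0
  · rw [← h0]; positivity
  · exact le_of_mul_le_mul_right h4 h0

end Aux

/-- Abstract convergence principle for `F = Σᵢ fᵢ Tᵢ fᵢ`: if `(fᵢ)` is a family of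
bounded self-adjoint operators with `Σᵢ ‖fᵢ u‖² = ‖u‖²` for every `u`, and `(Tᵢ)`
is a family of bounded operators with `‖Tᵢ‖ ≤ C`, then for every `u` the family
`(fᵢ (Tᵢ (fᵢ u)))` is summable, and `u ↦ Σᵢ fᵢ (Tᵢ (fᵢ u))` is a bounded linear
operator of norm at most `C`. -/
theorem stmt8 {H : Type*} [NormedAddCommGroup H] [InnerProductSpace ℂ H] [CompleteSpace H]
    {ι : Type*} (f : ι → H →L[ℂ] H) (hf_sa : ∀ i, IsSelfAdjoint (f i))
    (hf_sum : ∀ u : H, HasSum (fun i => ‖f i u‖ ^ 2) (‖u‖ ^ 2))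
    (T : ι → H →L[ℂ] H) (C : ℝ) (hC : 0 ≤ C) (hT : ∀ i, ‖T i‖ ≤ C) :
    (∀ u : H, Summable (fun i => f i (T i (f i u)))) ∧
    ∃ F : H →L[ℂ] H, (∀ u : H, HasSum (fun i => f i (T i (f i u))) (F u)) ∧ ‖F‖ ≤ C := by
  have key := stmt8_key f hf_sa hf_sum T C hC hT
  -- Summability
  have hsum : ∀ u : H, Summable (fun i => f i (T i (f i u))) := by
    intro u
    rw [summable_iff_vanishing]
    intro e he
    rcases Metric.mem_nhds_iff.mp he with ⟨ε, hε, hball⟩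
    have hscalar : Summable (fun i => ‖f i u‖ ^ 2) := (hf_sum u).summable
    rw [summable_iff_vanishing] at hscalar
    obtain ⟨s, hs⟩ := hscalar (Metric.ball 0 ((ε / (C + 1)) ^ 2))
      (Metric.ball_mem_nhds 0 (by positivity))
    refine ⟨s, fun t ht => ?_⟩
    apply hball
    rw [Metric.mem_ball, dist_zero_right]
    have h1 := hs t ht
    rw [Metric.mem_ball, dist_zero_right, Real.norm_eq_abs] at h1
    have h2 : ∑ i ∈ t, ‖f i u‖ ^ 2 < (ε / (C + 1)) ^ 2 := (le_abs_self _).trans_lt h1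
    calc ‖∑ i ∈ t, f i (T i (f i u))‖ ≤ C * Real.sqrt (∑ i ∈ t, ‖f i u‖ ^ 2) := key t u
      _ ≤ (C + 1) * Real.sqrt (∑ i ∈ t, ‖f i u‖ ^ 2) := by
          refine mul_le_mul_of_nonneg_right (by linarith) (Real.sqrt_nonneg _)
      _ < (C + 1) * (ε / (C + 1)) := by
          refine mul_lt_mul_of_pos_left ?_ (by positivity)
          have := Real.sqrt_lt_sqrt (Finset.sum_nonneg fun i _ => by positivity) h2
          rwa [Real.sqrt_sq (by positivity)] at this
      _ = ε := by field_simp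
  refine ⟨hsum, ?_⟩
  -- bound on the tsum
  have hbound : ∀ u : H, ‖∑' i, f i (T i (f i u))‖ ≤ C * ‖u‖ := by
    intro u
    have h := (hsum u).hasSum
    refine le_of_tendsto h.norm (Filter.Eventually.of_forall fun s => ?_)
    calc ‖∑ i ∈ s, f i (T i (f i u))‖ ≤ C * Real.sqrt (∑ i ∈ s, ‖f i u‖ ^ 2) := key s u
      _ ≤ C * ‖u‖ := by
          refine mul_le_mul_of_nonneg_left ?_ hC
          have h3 : ∑ i ∈ s, ‖f i u‖ ^ 2 ≤ ‖u‖ ^ 2 :=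
            sum_le_hasSum s (fun i _ => by positivity) (hf_sum u)
          calc Real.sqrt (∑ i ∈ s, ‖f i u‖ ^ 2) ≤ Real.sqrt (‖u‖ ^ 2) :=
                Real.sqrt_le_sqrt h3
            _ = ‖u‖ := Real.sqrt_sq (norm_nonneg u)
  -- Define F
  let F₀ : H →ₗ[ℂ] H :=
    { toFun := fun u => ∑' i, f i (T i (f i u))
      map_add' := fun u v => by
        show (∑' i, f i (T i (f i (u + v))))
            = (∑' i, f i (T i (f i u))) + ∑' i, f i (T i (f i v))
        have : (fun i => f i (T i (f i (u + v))))
            = fun i => f i (T i (f i u)) + f i (T i (f i v)) := by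
          funext i; simp [map_add]
        rw [this]
        exact ((hsum u).hasSum.add (hsum v).hasSum).tsum_eq
      map_smul' := fun c u => by
        show (∑' i, f i (T i (f i (c • u)))) = c • ∑' i, f i (T i (f i u))
        have : (fun i => f i (T i (f i (c • u)))) = fun i => c • f i (T i (f i u)) := by
          funext i; simp [map_smul]
        rw [this]
        exact ((hsum u).hasSum.const_smul c).tsum_eq }
  let F : H →L[ℂ] H := F₀.mkContinuous C hbound
  refine ⟨F, fun u => (hsum u).hasSum, ?_⟩
  exact F₀.mkContinuous_norm_le hC hbound
end
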